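/- Let T be the 2×2 integer matrix with entries T₁₁ = n, T₁₂ = 0, T₂₁ = 1, T₂₂ = m, where n ≥ m ≥ 2, and let D ⊂ ℤ² be any finite digit set. Set a₁ = (n−1, 1)ᵀ and a₂ = (0, m−1)ᵀ. Then the neighbor set 𝒩 of F(T,D) contains { ±k·e_i : k ≥ 1 an integer, i ∈ {1,2}, k·a_i ∈ ΔD } ∪ { ±(k·e₁ + l·e₂) : k, l ≥ 1 integers, k·a₁ + l·a₂ ∈ ΔD } ∪ { ±(k·e₁ − l·e₂) : k, l ≥ 1 integers, k·a₁ − l·a₂ ∈ ΔD }. -/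

import Mathlib

open Matrix Pointwise

/-- The canonical cast of an integer vector to a real vector. -/
def castVec {k : ℕ} (d : Fin k → ℤ) : Fin k → ℝ := fun i => (d i : ℝ)

/-- The lower triangular matrix `[[n, 0], [t, m]]`, as a real matrix. -/
noncomputable def Tmat (n t m : ℤ) : Matrix (Fin 2) (Fin 2) ℝ :=
  !![(n : ℝ), 0; (t : ℝ), (m : ℝ)]

/-- `a ∈ ΔD = D - D`. -/
def InDelta (D : Finset (Fin 2 → ℤ)) (a : Fin 2 → ℤ) : Prop :=
  ∃ d ∈ D, ∃ d' ∈ D, a = d - d'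

noncomputable def Bmat (n m : ℤ) : Matrix (Fin 2) (Fin 2) ℝ :=
  !![1/(n:ℝ), 0; -1/((n:ℝ)*(m:ℝ)), 1/(m:ℝ)]

lemma Bmat_mul_Tmat (n m : ℤ) (hn : 2 ≤ n) (hm : 2 ≤ m) :
    Bmat n m * Tmat n 1 m = 1 := by
  have hn0 : (n:ℝ) ≠ 0 := by
    have : (2:ℝ) ≤ (n:ℝ) := by exact_mod_cast hn
    linarith
  have hm0 : (m:ℝ) ≠ 0 := by
    have : (2:ℝ) ≤ (m:ℝ) := by exact_mod_cast hm
    linarith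
  ext i j
  fin_cases i <;> fin_cases j <;>
    simp [Bmat, Tmat, Matrix.mul_apply, Fin.sum_univ_two, Matrix.one_apply] <;>
    field_simp <;> ring

lemma Bmat_inv (n m : ℤ) (hn : 2 ≤ n) (hm : 2 ≤ m) : (Tmat n 1 m)⁻¹ = Bmat n m :=
  Matrix.inv_eq_left_inv (Bmat_mul_Tmat n m hn hm)

lemma Bmat_apply0 (n m : ℤ) (v : Fin 2 → ℝ) : (Bmat n m *ᵥ v) 0 = v 0 / n := by
  simp [Bmat, Matrix.mulVec, dotProduct, Fin.sum_univ_two]; ring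

lemma Bmat_apply1 (n m : ℤ) (v : Fin 2 → ℝ) :
    (Bmat n m *ᵥ v) 1 = -(v 0 / (n*m)) + v 1 / m := by
  simp [Bmat, Matrix.mulVec, dotProduct, Fin.sum_univ_two]; ring

lemma Bmat_norm (n m : ℤ) (hn : 2 ≤ n) (hm : 2 ≤ m) (v : Fin 2 → ℝ) :
    ‖Bmat n m *ᵥ v‖ ≤ (3/4) * ‖v‖ := by
  have hn0 : (2:ℝ) ≤ (n:ℝ) := by exact_mod_cast hn
  have hm0 : (2:ℝ) ≤ (m:ℝ) := by exact_mod_cast hm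
  rw [pi_norm_le_iff_of_nonneg (by positivity)]
  intro i
  have h0 : |v 0| ≤ ‖v‖ := norm_le_pi_norm v 0
  have h1 : |v 1| ≤ ‖v‖ := norm_le_pi_norm v 1
  have ha0 : -‖v‖ ≤ v 0 ∧ v 0 ≤ ‖v‖ := abs_le.mp h0
  have ha1 : -‖v‖ ≤ v 1 ∧ v 1 ≤ ‖v‖ := abs_le.mp h1
  have hnm : (4:ℝ) ≤ (n:ℝ)*(m:ℝ) := by nlinarith
  fin_cases i
  · show ‖(Bmat n m *ᵥ v) 0‖ ≤ 3/4 * ‖v‖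
    rw [Bmat_apply0, Real.norm_eq_abs]
    have key : |v 0 / n| ≤ ‖v‖/2 := by
      rw [abs_div, abs_of_pos (by linarith : (0:ℝ) < (n:ℝ)), div_le_iff₀ (by linarith)]
      nlinarith [norm_nonneg v]
    linarith [norm_nonneg v]
  · show ‖(Bmat n m *ᵥ v) 1‖ ≤ 3/4 * ‖v‖
    rw [Bmat_apply1, Real.norm_eq_abs, abs_le]
    have key : |v 0 / (n*m)| ≤ ‖v‖/4 := by
      rw [abs_div, abs_of_pos (by linarith : (0:ℝ) < (n:ℝ)*(m:ℝ)), div_le_iff₀ (by linarith)]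
      nlinarith [norm_nonneg v]
    have key2 : |v 1 / m| ≤ ‖v‖/2 := by
      rw [abs_div, abs_of_pos (by linarith : (0:ℝ) < (m:ℝ)), div_le_iff₀ (by linarith)]
      nlinarith [norm_nonneg v]
    have := abs_le.mp key
    have := abs_le.mp key2
    constructor <;> linarith [this.1, this.2]

def Tint (n m : ℤ) : Matrix (Fin 2) (Fin 2) ℤ := !![n, 0; 1, m]

lemma castVec_sub (a b : Fin 2 → ℤ) : castVec (a - b) = castVec a - castVec b := by
  funext i; simp [castVec]

lemma castVec_Tint (n m : ℤ) (z : Fin 2 → ℤ) :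
    castVec (Tint n m *ᵥ z) = Tmat n 1 m *ᵥ castVec z := by
  funext i
  fin_cases i <;>
    simp [Tint, Tmat, castVec, Matrix.mulVec, dotProduct, Fin.sum_univ_two] <;>
    push_cast <;> ring

lemma key (n m : ℤ) (hn : 2 ≤ n) (hm : 2 ≤ m)
    (D : Finset (Fin 2 → ℤ)) (F : Set (Fin 2 → ℝ)) (hne : F.Nonempty) (hcpt : IsCompact F)
    (hfix : F = ⋃ d ∈ D, (fun x => (Tmat n 1 m)⁻¹ *ᵥ (x + castVec d)) '' F)
    (z : Fin 2 → ℤ) (hΔ : InDelta D (Tint n m *ᵥ z - z)) :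
    castVec z ∈ F - F := by
  obtain ⟨d, hd, d', hd', heq⟩ := hΔ
  set A := Bmat n m with hA
  have hAinv : (Tmat n 1 m)⁻¹ = A := Bmat_inv n m hn hm
  set cz := castVec z with hcz
  have hmap : ∀ x ∈ F, ∀ e ∈ D, A *ᵥ (x + castVec e) ∈ F := by
    intro x hx e he
    rw [← hAinv]
    rw [hfix]
    exact Set.mem_biUnion he ⟨x, hx, rfl⟩
  have hTz : Tmat n 1 m *ᵥ cz - cz = castVec d - castVec d' := by
    rw [hcz, ← castVec_Tint, ← castVec_sub, heq, castVec_sub]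
  have hAz : A *ᵥ (Tmat n 1 m *ᵥ cz) = cz := by
    rw [Matrix.mulVec_mulVec, Bmat_mul_Tmat n m hn hm, Matrix.one_mulVec]
  have hstep : ∀ w ∈ F - F, A *ᵥ w + (cz - A *ᵥ cz) ∈ F - F := by
    intro w hw
    rw [Set.mem_sub] at hw
    obtain ⟨x, hx, y, hy, hxy⟩ := hw
    have h1 := hmap x hx d hd
    have h2 := hmap y hy d' hd'
    rw [Set.mem_sub]
    refine ⟨_, h1, _, h2, ?_⟩
    have hsum : (x + castVec d) - (y + castVec d') = w + (Tmat n 1 m *ᵥ cz - cz) := by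
      rw [hTz, ← hxy]; abel
    calc A *ᵥ (x + castVec d) - A *ᵥ (y + castVec d')
        = A *ᵥ ((x + castVec d) - (y + castVec d')) := by rw [Matrix.mulVec_sub]
      _ = A *ᵥ (w + (Tmat n 1 m *ᵥ cz - cz)) := by rw [hsum]
      _ = A *ᵥ w + (cz - A *ᵥ cz) := by
          rw [Matrix.mulVec_add, Matrix.mulVec_sub, hAz]
  have hmem : ∀ k : ℕ, cz - (A ^ k) *ᵥ cz ∈ F - F := by
    intro k
    induction k with
    | zero =>
      obtain ⟨x0, hx0⟩ := hne
      rw [pow_zero, Matrix.one_mulVec, sub_self]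
      rw [Set.mem_sub]
      exact ⟨x0, hx0, x0, hx0, sub_self x0⟩
    | succ k ih =>
      have h := hstep _ ih
      have heq2 : A *ᵥ (cz - A ^ k *ᵥ cz) + (cz - A *ᵥ cz) = cz - A ^ (k+1) *ᵥ cz := by
        rw [Matrix.mulVec_sub, Matrix.mulVec_mulVec, ← pow_succ']
        abel
      rwa [heq2] at h
  have hbound : ∀ k : ℕ, ‖(A ^ k) *ᵥ cz‖ ≤ (3/4)^k * ‖cz‖ := by
    intro k
    induction k with
    | zero => simp [Matrix.one_mulVec]
    | succ k ih =>
      calc ‖(A ^ (k+1)) *ᵥ cz‖ = ‖A *ᵥ ((A ^ k) *ᵥ cz)‖ := by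
            rw [Matrix.mulVec_mulVec, ← pow_succ']
        _ ≤ 3/4 * ‖(A ^ k) *ᵥ cz‖ := Bmat_norm n m hn hm _
        _ ≤ 3/4 * ((3/4)^k * ‖cz‖) := by linarith
        _ = (3/4)^(k+1) * ‖cz‖ := by ring
  have h0 : Filter.Tendsto (fun k : ℕ => (A ^ k) *ᵥ cz) Filter.atTop (nhds 0) := by
    apply squeeze_zero_norm hbound
    have := tendsto_pow_atTop_nhds_zero_of_lt_one (by norm_num : (0:ℝ) ≤ 3/4)
      (by norm_num : (3/4:ℝ) < 1)
    simpa using this.mul_const ‖cz‖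
  have hten : Filter.Tendsto (fun k : ℕ => cz - (A ^ k) *ᵥ cz) Filter.atTop (nhds cz) := by
    simpa using (tendsto_const_nhds (x := cz) (α := ℕ)).sub h0
  have hclosed : IsClosed (F - F) := by
    have himg : F - F = (fun p : (Fin 2 → ℝ) × (Fin 2 → ℝ) => p.1 - p.2) '' (F ×ˢ F) := by
      ext w
      constructor
      · rintro ⟨x, hx, y, hy, rfl⟩
        exact ⟨(x, y), Set.mk_mem_prod hx hy, rfl⟩
      · rintro ⟨⟨x, y⟩, hxy, rfl⟩
        exact ⟨x, hxy.1, y, hxy.2, rfl⟩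
    rw [himg]
    exact ((hcpt.prod hcpt).image (continuous_fst.sub continuous_snd)).isClosed
  exact hclosed.mem_of_tendsto hten (Filter.Eventually.of_forall hmem)

lemma InDelta.neg' {D : Finset (Fin 2 → ℤ)} {a : Fin 2 → ℤ} (h : InDelta D a) :
    InDelta D (-a) := by
  obtain ⟨d, hd, d', hd', rfl⟩ := h
  exact ⟨d', hd', d, hd, by abel⟩

lemma key2 (n m : ℤ) (hn : 2 ≤ n) (hm : 2 ≤ m)
    (D : Finset (Fin 2 → ℤ)) (F : Set (Fin 2 → ℝ)) (hne : F.Nonempty) (hcpt : IsCompact F)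
    (hfix : F = ⋃ d ∈ D, (fun x => (Tmat n 1 m)⁻¹ *ᵥ (x + castVec d)) '' F)
    (z a : Fin 2 → ℤ) (ha : Tint n m *ᵥ z - z = a) (hΔ : InDelta D a) :
    castVec z ∈ F - F ∧ castVec (-z) ∈ F - F := by
  constructor
  · exact key n m hn hm D F hne hcpt hfix z (ha ▸ hΔ)
  · apply key n m hn hm D F hne hcpt hfix (-z)
    have hneg : Tint n m *ᵥ (-z) - (-z) = -a := by
      rw [Matrix.mulVec_neg, ← ha]; abel
    rw [hneg]
    exact hΔ.neg'


/-- For `T = [[n,0],[1,m]]` with `n ≥ m ≥ 2` and any finite digit set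
`D ⊂ ℤ²`, with `a₁ = (n-1,1)ᵀ`, `a₂ = (0,m-1)ᵀ`: the neighbor set
`𝒩 = (F - F) ∩ (ℤ² \ {0})` of the attractor `F = F(T,D)` (the unique nonempty compact
set with `F = ⋃_{d ∈ D} T⁻¹(F + d)`) contains
`{±k·eᵢ : k ≥ 1, i ∈ {1,2}, k·aᵢ ∈ ΔD} ∪ {±(k·e₁ + l·e₂) : k,l ≥ 1, k·a₁ + l·a₂ ∈ ΔD}
∪ {±(k·e₁ - l·e₂) : k,l ≥ 1, k·a₁ - l·a₂ ∈ ΔD}`. -/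
theorem stmt10 (n m : ℤ) (hnm : m ≤ n) (hm : 2 ≤ m)
    (D : Finset (Fin 2 → ℤ)) (hD : D.Nonempty)
    (F : Set (Fin 2 → ℝ)) (hne : F.Nonempty) (hcpt : IsCompact F)
    (hfix : F = ⋃ d ∈ D, (fun x => (Tmat n 1 m)⁻¹ *ᵥ (x + castVec d)) '' F) :
    {z : Fin 2 → ℤ |
        (∃ k : ℕ, 1 ≤ k ∧ InDelta D ((k : ℤ) • ![n - 1, 1]) ∧
          (z = (k : ℤ) • ![1, 0] ∨ z = -((k : ℤ) • ![1, 0]))) ∨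
        (∃ k : ℕ, 1 ≤ k ∧ InDelta D ((k : ℤ) • ![0, m - 1]) ∧
          (z = (k : ℤ) • ![0, 1] ∨ z = -((k : ℤ) • ![0, 1]))) ∨
        (∃ k l : ℕ, 1 ≤ k ∧ 1 ≤ l ∧
          InDelta D ((k : ℤ) • ![n - 1, 1] + (l : ℤ) • ![0, m - 1]) ∧
          (z = (k : ℤ) • ![1, 0] + (l : ℤ) • ![0, 1] ∨
            z = -((k : ℤ) • ![1, 0] + (l : ℤ) • ![0, 1]))) ∨
        (∃ k l : ℕ, 1 ≤ k ∧ 1 ≤ l ∧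
          InDelta D ((k : ℤ) • ![n - 1, 1] - (l : ℤ) • ![0, m - 1]) ∧
          (z = (k : ℤ) • ![1, 0] - (l : ℤ) • ![0, 1] ∨
            z = -((k : ℤ) • ![1, 0] - (l : ℤ) • ![0, 1])))} ⊆
      {z : Fin 2 → ℤ | z ≠ 0 ∧ castVec z ∈ F - F} := by
  have hn : 2 ≤ n := le_trans hm hnm
  intro z hz
  simp only [Set.mem_setOf_eq] at hz ⊢
  rcases hz with ⟨k, hk, hΔ, hzz⟩ | ⟨k, hk, hΔ, hzz⟩ | ⟨k, l, hk, hl, hΔ, hzz⟩ |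
    ⟨k, l, hk, hl, hΔ, hzz⟩
  · have hkey := key2 n m hn hm D F hne hcpt hfix ((k : ℤ) • ![1, 0]) _
      (by funext i; fin_cases i <;>
        simp [Tint, Matrix.mulVec, dotProduct, Fin.sum_univ_two] <;> ring) hΔ
    rcases hzz with rfl | rfl
    · refine ⟨?_, hkey.1⟩
      intro h
      have := congrFun h 0
      simp at this
      omega
    · refine ⟨?_, hkey.2⟩
      intro h
      have := congrFun h 0
      simp at this
      omega
  · have hkey := key2 n m hn hm D F hne hcpt hfix ((k : ℤ) • ![0, 1]) _
      (by funext i; fin_cases i <;>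
        simp [Tint, Matrix.mulVec, dotProduct, Fin.sum_univ_two] <;> ring) hΔ
    rcases hzz with rfl | rfl
    · refine ⟨?_, hkey.1⟩
      intro h
      have := congrFun h 1
      simp at this
      omega
    · refine ⟨?_, hkey.2⟩
      intro h
      have := congrFun h 1
      simp at this
      omega
  · have hkey := key2 n m hn hm D F hne hcpt hfix ((k : ℤ) • ![1, 0] + (l : ℤ) • ![0, 1]) _
      (by funext i; fin_cases i <;>
        simp [Tint, Matrix.mulVec, dotProduct, Fin.sum_univ_two] <;> ring) hΔ
    rcases hzz with rfl | rfl
    · refine ⟨?_, hkey.1⟩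
      intro h
      have := congrFun h 0
      simp at this
      omega
    · refine ⟨?_, hkey.2⟩
      intro h
      have := congrFun h 0
      simp at this
      omega
  · have hkey := key2 n m hn hm D F hne hcpt hfix ((k : ℤ) • ![1, 0] - (l : ℤ) • ![0, 1]) _
      (by funext i; fin_cases i <;>
        simp [Tint, Matrix.mulVec, dotProduct, Fin.sum_univ_two] <;> ring) hΔ
    rcases hzz with rfl | rfl
    · refine ⟨?_, hkey.1⟩
      intro h
      have := congrFun h 0
      simp at this
      omega
    · refine ⟨?_, hkey.2⟩
      intro h
      have := congrFun h 0
      simp at this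
      omega
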